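/- Let d ≥ 1 be an integer, p ∈ (0,1) with pd not an integer, α ∈ (0,1), let j1^M = ⌊pd⌋, and suppose (p − (1−α))·d/α > j1^M. Then, over the family of ray densities r_{j1,j2} (integers 0 ≤ j1 < pd < j2 ≤ d), the minimum of VaR_α(r_{j1,j2}) equals j1^M + 1 and the maximum of VaR_α(r_{j1,j2}) equals d. -/

import Mathlib

open Finset

/-- Value-at-Risk at level `α` of a pmf `f` on `{0,…,d}`:
`VaR_α(f) = min {y ∈ {0,…,d} : ∑_{j=0}^y f(j) ≥ α}`. -/
noncomputable def VaR (d : ℕ) (α : ℝ) (f : ℕ → ℝ) : ℕ :=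
  sInf {y : ℕ | y ≤ d ∧ α ≤ ∑ j ∈ Finset.range (y + 1), f j}

/-- The ray density `r_{j1,j2}` on `{0,…,d}`: mass `(j2 − pd)/(j2 − j1)` at `j1` and
`(pd − j1)/(j2 − j1)` at `j2`. -/
noncomputable def rayDensity (d : ℕ) (p : ℝ) (j1 j2 : ℕ) : ℕ → ℝ := fun j =>
  if j = j1 then ((j2 : ℝ) - p * d) / ((j2 : ℝ) - (j1 : ℝ))
  else if j = j2 then (p * d - (j1 : ℝ)) / ((j2 : ℝ) - (j1 : ℝ))
  else 0

lemma ray_sum (d : ℕ) (p : ℝ) (j1 j2 n : ℕ) (hne : j1 ≠ j2) :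
    ∑ j ∈ Finset.range n, rayDensity d p j1 j2 j =
      (if j1 < n then ((j2 : ℝ) - p * d) / ((j2 : ℝ) - (j1 : ℝ)) else 0)
      + (if j2 < n then (p * d - (j1 : ℝ)) / ((j2 : ℝ) - (j1 : ℝ)) else 0) := by
  have hpt : ∀ j, rayDensity d p j1 j2 j =
      (if j = j1 then ((j2 : ℝ) - p * d) / ((j2 : ℝ) - (j1 : ℝ)) else 0)
      + (if j = j2 then (p * d - (j1 : ℝ)) / ((j2 : ℝ) - (j1 : ℝ)) else 0) := by
    intro j
    unfold rayDensity
    by_cases h1 : j = j1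
    · subst h1; simp [hne]
    · by_cases h2 : j = j2 <;> simp [h1, h2, Ne.symm hne]
  simp only [hpt, Finset.sum_add_distrib, Finset.sum_ite_eq', Finset.mem_range]

lemma var_eq (d : ℕ) (p α : ℝ) (hα0 : 0 < α) (hα1 : α ≤ 1) (j1 j2 : ℕ)
    (h1 : (j1 : ℝ) < p * d) (h2 : p * d < j2) (h2d : j2 ≤ d)
    (hw : ((j2 : ℝ) - p * d) / ((j2 : ℝ) - (j1 : ℝ)) < α) :
    VaR d α (rayDensity d p j1 j2) = j2 := by
  have hlt : j1 < j2 := by exact_mod_cast Nat.cast_lt.mp (by exact_mod_cast h1.trans h2)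
  have hne : j1 ≠ j2 := hlt.ne
  have hD : (0 : ℝ) < (j2 : ℝ) - (j1 : ℝ) := by
    have : (j1 : ℝ) < j2 := by exact_mod_cast hlt
    linarith
  have hsum : ∀ n, j2 < n → ∑ j ∈ Finset.range n, rayDensity d p j1 j2 j = 1 := by
    intro n hn
    rw [ray_sum d p j1 j2 n hne, if_pos (lt_trans hlt hn), if_pos hn, ← add_div]
    field_simp
    ring
  have hmem : j2 ∈ {y : ℕ | y ≤ d ∧ α ≤ ∑ j ∈ Finset.range (y + 1), rayDensity d p j1 j2 j} := by
    refine ⟨h2d, ?_⟩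
    rw [hsum (j2 + 1) (Nat.lt_succ_self _)]
    exact hα1
  refine le_antisymm (Nat.sInf_le hmem) (le_csInf ⟨j2, hmem⟩ ?_)
  rintro y ⟨hyd, hyα⟩
  by_contra hy
  push_neg at hy
  rw [ray_sum d p j1 j2 (y + 1) hne] at hyα
  have hj2n : ¬ j2 < y + 1 := by omega
  rw [if_neg hj2n] at hyα
  by_cases hj1 : j1 < y + 1
  · rw [if_pos hj1] at hyα; linarith
  · rw [if_neg hj1] at hyα; linarith

/-- If `pd` is not an integer and `(p − (1−α))d/α > ⌊pd⌋`, then over the ray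
densities `r_{j1,j2}` (`0 ≤ j1 < pd < j2 ≤ d`) the minimum of `VaR_α` is `⌊pd⌋ + 1` and the
maximum is `d`. -/
theorem stmt_17 (d : ℕ) (hd : 1 ≤ d) (p : ℝ) (hp : p ∈ Set.Ioo (0 : ℝ) 1)
    (hnotint : ¬ ∃ k : ℕ, (k : ℝ) = p * d)
    (α : ℝ) (hα : α ∈ Set.Ioo (0 : ℝ) 1)
    (hgt : (Nat.floor (p * d) : ℝ) < (p - (1 - α)) * d / α)
    (S : Set ℕ)
    (hS : S = {v : ℕ | ∃ j1 j2 : ℕ, (j1 : ℝ) < p * d ∧ p * d < (j2 : ℝ) ∧ j2 ≤ d ∧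
      v = VaR d α (rayDensity d p j1 j2)}) :
    IsLeast S (Nat.floor (p * d) + 1) ∧ IsGreatest S d := by
  obtain ⟨hp0, hp1⟩ := hp
  obtain ⟨hα0, hα1⟩ := hα
  set m := Nat.floor (p * d) with hm
  have hd0 : (0 : ℝ) < d := by exact_mod_cast hd
  have hpd0 : 0 < p * d := by positivity
  have hmle : (m : ℝ) ≤ p * d := Nat.floor_le hpd0.le
  have hmlt : (m : ℝ) < p * d := lt_of_le_of_ne hmle (fun h => hnotint ⟨m, h⟩)
  have hpdd : p * d < d := by nlinarith
  have hm1 : p * d < (m : ℝ) + 1 := Nat.lt_floor_add_one _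
  have hmd : m < d := by
    have : (m : ℝ) < d := hmlt.trans hpdd
    exact_mod_cast this
  have hkey : (1 - α) * d + α * m < p * d := by
    have := (lt_div_iff₀ hα0).mp hgt
    nlinarith
  have hw : ∀ j1 j2 : ℕ, (j1 : ℝ) < p * d → p * d < (j2 : ℝ) → j2 ≤ d →
      ((j2 : ℝ) - p * d) / ((j2 : ℝ) - (j1 : ℝ)) < α := by
    intro j1 j2 h1 h2 h2d
    have hD : (0 : ℝ) < (j2 : ℝ) - (j1 : ℝ) := by linarith
    rw [div_lt_iff₀ hD]
    have hj1m : (j1 : ℝ) ≤ m := by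
      exact_mod_cast Nat.le_floor h1.le
    have hj2d : (j2 : ℝ) ≤ d := by exact_mod_cast h2d
    nlinarith
  have hVaR : ∀ j1 j2 : ℕ, (j1 : ℝ) < p * d → p * d < (j2 : ℝ) → j2 ≤ d →
      VaR d α (rayDensity d p j1 j2) = j2 := fun j1 j2 h1 h2 h2d =>
    var_eq d p α hα0 hα1.le j1 j2 h1 h2 h2d (hw j1 j2 h1 h2 h2d)
  subst hS
  constructor
  · constructor
    · refine ⟨m, m + 1, hmlt, ?_, by omega, ?_⟩
      · push_cast; exact hm1
      · exact (hVaR m (m + 1) hmlt (by push_cast; exact hm1) (by omega)).symm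
    · rintro v ⟨j1, j2, h1, h2, h2d, hv⟩
      rw [hv, hVaR j1 j2 h1 h2 h2d]
      have : (m : ℝ) < j2 := hmlt.trans h2
      have : m < j2 := by exact_mod_cast this
      omega
  · constructor
    · exact ⟨m, d, hmlt, hpdd, le_refl d, (hVaR m d hmlt hpdd (le_refl d)).symm⟩
    · rintro v ⟨j1, j2, h1, h2, h2d, hv⟩
      rw [hv, hVaR j1 j2 h1 h2 h2d]
      exact h2d
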